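/- Let c : [0,∞) → [0,∞) be nondecreasing, concave, and differentiable with convex derivative c′. Then there exists a continuous, nondecreasing, concave, piecewise-linear function g : [0,∞) → ℝ such that for every integer i ≥ 0: ∫_i^{i+1} g(t) dt = c(i+1). -/

import Mathlib

open Set
private lemma delta_exists (e : ℕ → ℝ) (he0 : ∀ i, 0 ≤ e i)
    (hemono : ∀ i, e (i+1) ≤ e i)
    (heconv : ∀ i, 2 * e (i+1) ≤ e i + e (i+2)) :
    ∃ δ : ℕ → ℝ, (∀ i, δ (i+1) = e i - δ i) ∧ (∀ i, e i / 2 ≤ δ i) := by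
  set S : ℕ → ℝ := fun n => ∑ j ∈ Finset.range n, (-1:ℝ)^j * e j with hSdef
  have hSsucc : ∀ n, S (n+1) = S n + (-1)^n * e n := by
    intro n; simp [hSdef, Finset.sum_range_succ]
  have hpow_even : ∀ k : ℕ, ((-1:ℝ))^(2*k) = 1 := by
    intro k; exact Even.neg_one_pow (even_two_mul k)
  have hpow_odd : ∀ k : ℕ, ((-1:ℝ))^(2*k+1) = -1 := by
    intro k; rw [pow_succ, hpow_even]; ring
  set A : ℕ → ℝ := fun k => S (2*k) + e (2*k) / 2 with hAdef
  set B : ℕ → ℝ := fun k => S (2*k+1) - e (2*k+1) / 2 with hBdef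
  have hAmono : Monotone A := by
    apply monotone_nat_of_le_succ
    intro k
    have h1 : S (2*(k+1)) = S (2*k) + e (2*k) - e (2*k+1) := by
      have : 2*(k+1) = (2*k+1)+1 := by ring
      rw [this, hSsucc, hSsucc, hpow_even, hpow_odd]; ring
    have := heconv (2*k)
    have h2 : e (2*(k+1)) = e (2*k+2) := by norm_num [Nat.mul_succ]
    simp only [hAdef, h1, h2]
    linarith
  have hBanti : Antitone B := by
    apply antitone_nat_of_succ_le
    intro k
    have h1 : S (2*(k+1)+1) = S (2*k+1) - e (2*k+1) + e (2*k+2) := by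
      have : 2*(k+1)+1 = ((2*k+1)+1)+1 := by ring
      rw [this, hSsucc, hSsucc, hpow_odd]
      have : ((-1:ℝ))^(2*k+1+1) = 1 := by
        have : 2*k+1+1 = 2*(k+1) := by ring
        rw [this]; exact hpow_even _
      rw [this]; ring
    have := heconv (2*k+1)
    have h2 : e (2*(k+1)+1) = e (2*k+3) := by norm_num [Nat.mul_succ]
    have h3 : 2*k+1+2 = 2*k+3 := by ring
    rw [h3] at this
    simp only [hBdef, h1, h2]
    linarith
  have hAB : ∀ k, A k ≤ B k := by
    intro k
    have h1 : S (2*k+1) = S (2*k) + e (2*k) := by rw [hSsucc, hpow_even]; ring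
    have := hemono (2*k)
    simp only [hAdef, hBdef, h1]
    linarith
  have hABall : ∀ k j, A k ≤ B j := by
    intro k j
    calc A k ≤ A (max k j) := hAmono (le_max_left _ _)
    _ ≤ B (max k j) := hAB _
    _ ≤ B j := hBanti (le_max_right _ _)
  have hbdd : BddAbove (Set.range A) := ⟨B 0, by rintro _ ⟨k, rfl⟩; exact hABall k 0⟩
  set δ0 : ℝ := ⨆ k, A k with hδ0def
  have hδ0A : ∀ k, A k ≤ δ0 := fun k => le_ciSup hbdd k
  have hδ0B : ∀ j, δ0 ≤ B j := fun j => ciSup_le fun k => hABall k j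
  refine ⟨fun i => (-1)^i * (δ0 - S i), ?_, ?_⟩
  · intro i
    have hsq : ((-1:ℝ))^i * ((-1:ℝ))^i = 1 := by
      rw [← pow_add]; exact Even.neg_one_pow ⟨i, rfl⟩
    dsimp only
    rw [hSsucc, pow_succ]
    linear_combination e i * hsq
  · intro i
    rcases Nat.even_or_odd i with ⟨k, hk⟩ | ⟨k, hk⟩
    · have hi : i = 2*k := by omega
      subst hi
      have := hδ0A k
      dsimp only
      rw [hpow_even]
      simp only [hAdef] at this
      linarith
    · have hi : i = 2*k+1 := by omega
      subst hi
      have := hδ0B k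
      dsimp only
      rw [hpow_odd]
      simp only [hBdef] at this
      linarith
private lemma Hmono (c c' : ℝ → ℝ)
    (hcderiv : ∀ y ≥ (0:ℝ), HasDerivWithinAt c (c' y) (Set.Ici 0) y)
    (hc'conv : ConvexOn ℝ (Set.Ici 0) c') :
    MonotoneOn (fun t => c (t+2) - 2 * c (t+1) + c t) (Set.Ici 0) := by
  have hshift : ∀ k : ℝ, 0 ≤ k → ∀ x > (0:ℝ), HasDerivAt (fun t => c (t+k)) (c' (x+k)) x := by
    intro k hk x hx
    have h1 : HasDerivAt c (c' (x+k)) (x+k) :=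
      (hcderiv (x+k) (by linarith)).hasDerivAt (Ici_mem_nhds (by linarith))
    simpa [Function.comp_def] using h1.comp x ((hasDerivAt_id x).add_const k)
  have hcc : ContinuousOn c (Ici 0) := fun x hx => (hcderiv x hx).continuousWithinAt
  have hcont : ∀ k : ℝ, 0 ≤ k → ContinuousOn (fun t => c (t+k)) (Ici 0) := by
    intro k hk
    apply hcc.comp ((continuous_id.add continuous_const).continuousOn)
    intro y hy
    simp only [mem_Ici, id_eq, Pi.add_apply] at *
    linarith
  have hH : ∀ x > (0:ℝ), HasDerivAt (fun t => c (t+2) - 2 * c (t+1) + c t)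
      (c' (x+2) - 2 * c' (x+1) + c' x) x := by
    intro x hx
    have h0 := hshift 0 le_rfl x hx
    simp only [add_zero] at h0
    exact ((hshift 2 (by norm_num) x hx).sub ((hshift 1 (by norm_num) x hx).const_mul 2)).add h0
  apply monotoneOn_of_deriv_nonneg (convex_Ici 0)
  · exact ((hcont 2 (by norm_num)).sub (continuousOn_const.mul (hcont 1 (by norm_num)))).add hcc
  · intro x hx
    rw [interior_Ici] at hx
    exact ((hH x hx).differentiableAt).differentiableWithinAt
  · intro x hx
    rw [interior_Ici] at hx
    have hx' : (0:ℝ) < x := hx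
    rw [(hH x hx).deriv]
    have key := hc'conv.2 (show x ∈ Ici (0:ℝ) from le_of_lt hx')
      (show x+2 ∈ Ici (0:ℝ) by simp only [mem_Ici]; linarith)
      (by norm_num : (0:ℝ) ≤ 1/2) (by norm_num : (0:ℝ) ≤ 1/2) (by norm_num)
    have harg : (1/2:ℝ) • x + (1/2:ℝ) • (x+2) = x + 1 := by
      simp [smul_eq_mul]; ring
    rw [harg] at key
    simp only [smul_eq_mul] at key
    linarith


/-- given a nondecreasing, concave, differentiable marginal cost
`c : [0,∞) → [0,∞)` whose derivative `c'` is convex, there exists a continuous,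
nondecreasing, concave function `g` on `[0,∞)` that is linear on each interval
`[i, i+1]` between consecutive integers, such that `∫_i^{i+1} g(t) dt = c(i+1)`
for every integer `i ≥ 0`. -/
theorem stmt16 (c c' : ℝ → ℝ)
    (hcnn : ∀ y ≥ (0:ℝ), 0 ≤ c y)
    (hcmono : MonotoneOn c (Set.Ici 0))
    (hcconc : ConcaveOn ℝ (Set.Ici 0) c)
    (hcderiv : ∀ y ≥ (0:ℝ), HasDerivWithinAt c (c' y) (Set.Ici 0) y)
    (hc'conv : ConvexOn ℝ (Set.Ici 0) c') :
    ∃ g : ℝ → ℝ,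
      ContinuousOn g (Set.Ici 0) ∧
      MonotoneOn g (Set.Ici 0) ∧
      ConcaveOn ℝ (Set.Ici 0) g ∧
      (∀ i : ℕ, ∀ t ∈ Set.Icc (i:ℝ) ((i:ℝ)+1),
        g t = g i + (g ((i:ℝ)+1) - g i) * (t - i)) ∧
      (∀ i : ℕ, (∫ t in (i:ℝ)..((i:ℝ)+1), g t) = c ((i:ℝ)+1)) := by
  classical
  have hHm := Hmono c c' hcderiv hc'conv
  obtain ⟨e, hedef⟩ : ∃ e : ℕ → ℝ, ∀ i, e i = c ((i:ℝ)+2) - c ((i:ℝ)+1) :=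
    ⟨_, fun i => rfl⟩
  have hmem : ∀ x : ℝ, 0 ≤ x → x ∈ Ici (0:ℝ) := fun x hx => hx
  have he0 : ∀ i, 0 ≤ e i := by
    intro i
    have := hcmono (hmem ((i:ℝ)+1) (by positivity)) (hmem ((i:ℝ)+2) (by positivity)) (by linarith)
    rw [hedef]; linarith
  have hemono : ∀ i, e (i+1) ≤ e i := by
    intro i
    have key := hcconc.2 (hmem ((i:ℝ)+1) (by positivity)) (hmem ((i:ℝ)+3) (by positivity))
      (by norm_num : (0:ℝ) ≤ 1/2) (by norm_num : (0:ℝ) ≤ 1/2) (by norm_num)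
    have harg : (1/2:ℝ) • ((i:ℝ)+1) + (1/2:ℝ) • ((i:ℝ)+3) = (i:ℝ) + 2 := by
      simp [smul_eq_mul]; ring
    rw [harg] at key
    simp only [smul_eq_mul] at key
    simp only [hedef]
    push_cast
    ring_nf at key ⊢
    linarith
  have heconv : ∀ i, 2 * e (i+1) ≤ e i + e (i+2) := by
    intro i
    have key := hHm (hmem ((i:ℝ)+1) (by positivity)) (hmem ((i:ℝ)+2) (by positivity))
      (by linarith)
    simp only at key
    simp only [hedef]
    push_cast
    ring_nf at key ⊢
    linarith
  obtain ⟨δ, hδrec, hδlb⟩ := delta_exists e he0 hemono heconv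
  have hδ0 : ∀ i, 0 ≤ δ i := fun i =>
    le_trans (show (0:ℝ) ≤ e i / 2 by linarith [he0 i]) (hδlb i)
  have hδstep : ∀ i, δ (i+1) ≤ δ i := by
    intro i
    have h1 := hδlb i
    rw [hδrec i]
    linarith
  have hδanti : Antitone δ := antitone_nat_of_succ_le hδstep
  obtain ⟨a, hadef⟩ : ∃ a : ℕ → ℝ, ∀ i, a i = c ((i:ℝ)+1) - δ i :=
    ⟨_, fun i => rfl⟩
  have hasucc : ∀ i, a (i+1) = a i + 2 * δ i := by
    intro i
    simp only [hadef]
    rw [hδrec i]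
    simp only [hedef]
    push_cast
    ring
  obtain ⟨g, hgdef⟩ : ∃ g : ℝ → ℝ, ∀ t, g t = a ⌊t⌋₊ + 2 * δ ⌊t⌋₊ * (t - (⌊t⌋₊:ℝ)) :=
    ⟨_, fun t => rfl⟩
  have hgnat : ∀ n : ℕ, g (n:ℝ) = a n := by
    intro n
    rw [hgdef]; simp
  have hseg : ∀ i : ℕ, ∀ t : ℝ, (i:ℝ) ≤ t → t ≤ (i:ℝ)+1 → g t = a i + 2 * δ i * (t - i) := by
    intro i t h1 h2
    rcases lt_or_eq_of_le h2 with h2 | h2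
    · have hfl : ⌊t⌋₊ = i :=
        (Nat.floor_eq_iff (le_trans (Nat.cast_nonneg i) h1)).2 ⟨h1, h2⟩
      rw [hgdef, hfl]
    · rw [h2]
      have hc1 : ((i:ℝ)+1) = ((i+1:ℕ):ℝ) := by push_cast; ring
      rw [hc1, hgnat, hasucc]
      push_cast
      ring
  -- the two slope estimate lemmas, by induction on the number of pieces spanned
  have hL1 : ∀ k : ℕ, ∀ u v : ℝ, 0 ≤ u → u ≤ v → ⌊v⌋₊ ≤ ⌊u⌋₊ + k →
      g v - g u ≤ 2 * δ ⌊u⌋₊ * (v - u) := by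
    intro k
    induction k with
    | zero =>
      intro u v hu huv hk
      have hfl : ⌊v⌋₊ = ⌊u⌋₊ := le_antisymm (by omega) (Nat.floor_le_floor huv)
      have hgu := hseg ⌊u⌋₊ u (Nat.floor_le hu) (Nat.lt_floor_add_one u).le
      have hgv := hseg ⌊u⌋₊ v (by rw [← hfl]; exact Nat.floor_le (hu.trans huv))
        (by rw [← hfl]; exact (Nat.lt_floor_add_one v).le)
      rw [hgu, hgv]
      ring_nf
      linarith
    | succ k ih =>
      intro u v hu huv hk
      by_cases h : ⌊v⌋₊ ≤ ⌊u⌋₊ + k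
      · exact ih u v hu huv h
      · have hflv : ⌊u⌋₊ + 1 ≤ ⌊v⌋₊ := by omega
        set m : ℝ := ((⌊u⌋₊ + 1 : ℕ) : ℝ) with hmdef
        have hmv : m ≤ v := le_trans (by exact_mod_cast Nat.cast_le.2 hflv)
          (Nat.floor_le (hu.trans huv))
        have hum : u ≤ m := by
          have := (Nat.lt_floor_add_one u).le
          simp only [hmdef]; push_cast; linarith
        have hgm : g m = a ⌊u⌋₊ + 2 * δ ⌊u⌋₊ := by rw [hmdef, hgnat, hasucc]
        have hgu : g u = a ⌊u⌋₊ + 2 * δ ⌊u⌋₊ * (u - ⌊u⌋₊) :=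
          hseg ⌊u⌋₊ u (Nat.floor_le hu) (Nat.lt_floor_add_one u).le
        have hflm : ⌊m⌋₊ = ⌊u⌋₊ + 1 := by rw [hmdef, Nat.floor_natCast]
        have hih := ih m v (by positivity) hmv (by omega)
        rw [hflm] at hih
        have hδle : δ (⌊u⌋₊ + 1) ≤ δ ⌊u⌋₊ := hδstep _
        have h1 : 2 * δ (⌊u⌋₊+1) * (v - m) ≤ 2 * δ ⌊u⌋₊ * (v - m) := by
          apply mul_le_mul_of_nonneg_right _ (by linarith)
          linarith
        have hm1 : m = (⌊u⌋₊:ℝ) + 1 := by rw [hmdef]; push_cast; ring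
        nlinarith [hδ0 ⌊u⌋₊]
  have hL2 : ∀ k : ℕ, ∀ u v : ℝ, 0 ≤ u → u ≤ v → ⌊v⌋₊ ≤ ⌊u⌋₊ + k →
      2 * δ ⌊v⌋₊ * (v - u) ≤ g v - g u := by
    intro k
    induction k with
    | zero =>
      intro u v hu huv hk
      have hfl : ⌊v⌋₊ = ⌊u⌋₊ := le_antisymm (by omega) (Nat.floor_le_floor huv)
      have hgu := hseg ⌊u⌋₊ u (Nat.floor_le hu) (Nat.lt_floor_add_one u).le
      have hgv := hseg ⌊u⌋₊ v (by rw [← hfl]; exact Nat.floor_le (hu.trans huv))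
        (by rw [← hfl]; exact (Nat.lt_floor_add_one v).le)
      rw [hgu, hgv, hfl]
      ring_nf
      linarith
    | succ k ih =>
      intro u v hu huv hk
      by_cases h : ⌊v⌋₊ ≤ ⌊u⌋₊ + k
      · exact ih u v hu huv h
      · have hflv : ⌊u⌋₊ + 1 ≤ ⌊v⌋₊ := by omega
        set m : ℝ := ((⌊u⌋₊ + 1 : ℕ) : ℝ) with hmdef
        have hmv : m ≤ v := le_trans (by exact_mod_cast Nat.cast_le.2 hflv)
          (Nat.floor_le (hu.trans huv))
        have hum : u ≤ m := by
          have := (Nat.lt_floor_add_one u).le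
          simp only [hmdef]; push_cast; linarith
        have hgm : g m = a ⌊u⌋₊ + 2 * δ ⌊u⌋₊ := by rw [hmdef, hgnat, hasucc]
        have hgu : g u = a ⌊u⌋₊ + 2 * δ ⌊u⌋₊ * (u - ⌊u⌋₊) :=
          hseg ⌊u⌋₊ u (Nat.floor_le hu) (Nat.lt_floor_add_one u).le
        have hflm : ⌊m⌋₊ = ⌊u⌋₊ + 1 := by rw [hmdef, Nat.floor_natCast]
        have hih := ih m v (by positivity) hmv (by omega)
        have hδle : δ ⌊v⌋₊ ≤ δ ⌊u⌋₊ := hδanti (Nat.floor_le_floor huv)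
        have h1 : 2 * δ ⌊v⌋₊ * (m - u) ≤ 2 * δ ⌊u⌋₊ * (m - u) := by
          apply mul_le_mul_of_nonneg_right _ (by linarith)
          linarith
        have hδle2 : δ ⌊v⌋₊ ≤ δ (⌊u⌋₊ + 1) := hδanti hflv
        have hm1 : m = (⌊u⌋₊:ℝ) + 1 := by rw [hmdef]; push_cast; ring
        nlinarith [hδ0 ⌊v⌋₊]
  have hmono : MonotoneOn g (Ici 0) := by
    intro u hu v hv huv
    have := hL2 ⌊v⌋₊ u v hu huv (by omega)
    nlinarith [hδ0 ⌊v⌋₊]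
  have hcontg : ContinuousOn g (Ici 0) := by
    have hlip : LipschitzOnWith (Real.toNNReal (2 * δ 0)) g (Ici 0) := by
      rw [lipschitzOnWith_iff_dist_le_mul]
      intro x hx y hy
      have hcoe : ((Real.toNNReal (2 * δ 0)) : ℝ) = 2 * δ 0 :=
        Real.coe_toNNReal _ (by linarith [hδ0 0])
      rw [Real.dist_eq, Real.dist_eq, hcoe]
      have key : ∀ u v : ℝ, 0 ≤ u → u ≤ v → |g v - g u| ≤ 2 * δ 0 * |v - u| := by
        intro u v hu huv
        have h1 := hL1 ⌊v⌋₊ u v hu huv (by omega)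
        have h2 := hL2 ⌊v⌋₊ u v hu huv (by omega)
        have hδle : δ ⌊u⌋₊ ≤ δ 0 := hδanti (Nat.zero_le _)
        rw [abs_of_nonneg (by nlinarith [hδ0 ⌊v⌋₊]), abs_of_nonneg (by linarith)]
        nlinarith
      rcases le_total x y with hxy | hxy
      · have := key x y hx hxy
        rw [abs_sub_comm (g x) (g y), abs_sub_comm x y]
        exact this
      · exact key y x hy hxy
    exact hlip.continuousOn
  have hconc : ConcaveOn ℝ (Ici 0) g := by
    rw [concaveOn_iff_slope_anti_adjacent]
    refine ⟨convex_Ici 0, ?_⟩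
    intro x y z hx hz hxy hyz
    have hx0 : (0:ℝ) ≤ x := hx
    have hy0 : (0:ℝ) ≤ y := le_of_lt (lt_of_le_of_lt hx0 hxy)
    have h1 := hL1 ⌊z⌋₊ y z hy0 hyz.le (by omega)
    have h2 := hL2 ⌊y⌋₊ x y hx0 hxy.le (by omega)
    rw [div_le_div_iff₀ (by linarith) (by linarith)]
    nlinarith
  refine ⟨g, hcontg, hmono, hconc, ?_, ?_⟩
  · intro i t ht
    rw [hseg i t ht.1 ht.2]
    have hgi : g (i:ℝ) = a i := hgnat i
    have hgi1 : g ((i:ℝ)+1) = a i + 2 * δ i := by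
      rw [hseg i ((i:ℝ)+1) (by linarith) le_rfl]; ring
    rw [hgi, hgi1]
    ring
  · intro i
    have hle : (i:ℝ) ≤ (i:ℝ)+1 := by linarith
    have heqon : EqOn g (fun t => a i + 2 * δ i * (t - i)) (Set.uIcc (i:ℝ) ((i:ℝ)+1)) := by
      intro t ht
      rw [Set.uIcc_of_le hle] at ht
      exact hseg i t ht.1 ht.2
    rw [intervalIntegral.integral_congr heqon]
    have hderiv : ∀ t ∈ Set.uIcc (i:ℝ) ((i:ℝ)+1),
        HasDerivAt (fun t => a i * t + δ i * (t - (i:ℝ))^2) (a i + 2 * δ i * (t - i)) t := by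
      intro t _
      have h1 : HasDerivAt (fun t : ℝ => (t - (i:ℝ))^2) (2*(t-(i:ℝ))) t := by
        simpa [Pi.pow_def] using ((hasDerivAt_id t).sub_const (i:ℝ)).pow 2
      have h2 : HasDerivAt (fun t => a i * t + δ i * (t - (i:ℝ))^2) (a i * 1 + δ i * (2 * (t - i))) t :=
        ((hasDerivAt_id t).const_mul (a i)).add (h1.const_mul (δ i))
      convert h2 using 1
      ring
    rw [intervalIntegral.integral_eq_sub_of_hasDerivAt hderiv
      ((Continuous.intervalIntegrable (by fun_prop) _ _))]
    rw [hadef]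
    ring
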